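/- There is an absolute constant C such that for all nonnegative locally integrable functions f, g : ℝ → [0,∞), one has the pointwise estimate M_D(f,g)(x) ≤ C · M₁(f · M₁g)(x) for every x ∈ ℝ. -/

import Mathlib

open MeasureTheory Set Real
open scoped ENNReal NNReal

/-- The one-dimensional centered Hardy–Littlewood maximal operator, acting on
nonnegative (extended-real-valued) functions:
`M₁ F x = sup_{r > 0} (1/(2r)) ∫_{x-r}^{x+r} F(s) ds`. -/
noncomputable def M1 (F : ℝ → ℝ≥0∞) (x : ℝ) : ℝ≥0∞ :=
  ⨆ (r : ℝ) (_ : 0 < r),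
    (∫⁻ s in Icc (x - r) (x + r), F s) / ENNReal.ofReal (2 * r)

/-- The parallelogram `P_{x,l,w}` with vertices `(x±l, x±l±w)`: its two
vertical sides have length `2w` and its other two sides are parallel to the
diagonal `D = {(t,t) : t ∈ ℝ}` . -/
def para (x l w : ℝ) : Set (ℝ × ℝ) :=
  {p | |p.1 - x| ≤ l ∧ |p.2 - p.1| ≤ w}

/-- The diagonal bilinear maximal operator
`M_D(f,g)(x) = sup_{l,w > 0} (1/|P_{x,l,w}|) ∫_{P_{x,l,w}} |f(y) g(z)| dy dz`. -/
noncomputable def MD (f g : ℝ → ℝ) (x : ℝ) : ℝ≥0∞ :=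
  ⨆ (l : ℝ) (_ : 0 < l) (w : ℝ) (_ : 0 < w),
    (∫⁻ p in para x l w, ENNReal.ofReal |f p.1 * g p.2|) / volume (para x l w)

lemma measurableSet_para (x l w : ℝ) : MeasurableSet (para x l w) := by
  have h1 : IsClosed {p : ℝ × ℝ | |p.1 - x| ≤ l} :=
    isClosed_le (by fun_prop) continuous_const
  have h2 : IsClosed {p : ℝ × ℝ | |p.2 - p.1| ≤ w} :=
    isClosed_le (by fun_prop) continuous_const
  exact (h1.inter h2).measurableSet

lemma mem_para_iff {x l w : ℝ} (p : ℝ × ℝ) :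
    p ∈ para x l w ↔ p.1 ∈ Icc (x - l) (x + l) ∧ p.2 ∈ Icc (p.1 - w) (p.1 + w) := by
  simp only [para, mem_setOf_eq, mem_Icc, abs_le]
  constructor <;> rintro ⟨⟨a, b⟩, c, d⟩ <;> constructor <;> constructor <;> linarith

/-- Volume of the parallelogram. -/
lemma volume_para {x l w : ℝ} (hl : 0 ≤ l) (hw : 0 ≤ w) :
    volume (para x l w) = ENNReal.ofReal (2 * l) * ENNReal.ofReal (2 * w) := by
  rw [Measure.volume_eq_prod ℝ ℝ, Measure.prod_apply (measurableSet_para x l w)]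
  have : ∀ y : ℝ, (Prod.mk y ⁻¹' para x l w) =
      if y ∈ Icc (x - l) (x + l) then Icc (y - w) (y + w) else (∅ : Set ℝ) := by
    intro y
    ext z
    simp only [mem_preimage, mem_para_iff]
    by_cases hy : y ∈ Icc (x - l) (x + l) <;> simp [hy]
  calc (∫⁻ y, volume (Prod.mk y ⁻¹' para x l w))
      = ∫⁻ y, (Icc (x - l) (x + l)).indicator (fun _ => ENNReal.ofReal (2 * w)) y := by
        congr 1; funext y
        rw [this y]
        by_cases hy : y ∈ Icc (x - l) (x + l) <;>
          simp [hy, Real.volume_Icc, indicator] <;> ring_nf <;>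
            rw [ENNReal.ofReal_mul' (by norm_num), ENNReal.ofReal_ofNat]
    _ = ENNReal.ofReal (2 * l) * ENNReal.ofReal (2 * w) := by
        rw [lintegral_indicator measurableSet_Icc, setLIntegral_const, Real.volume_Icc]
        rw [mul_comm]
        congr 1
        ring_nf

/-- Bound coming from the definition of `M1`. -/
lemma setLIntegral_le_M1 (F : ℝ → ℝ≥0∞) (x r : ℝ) (hr : 0 < r) :
    (∫⁻ s in Icc (x - r) (x + r), F s) ≤ M1 F x * ENNReal.ofReal (2 * r) := by
  have h : (∫⁻ s in Icc (x - r) (x + r), F s) / ENNReal.ofReal (2 * r) ≤ M1 F x := by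
    refine le_trans (le_of_eq rfl) ?_
    exact le_iSup₂ (f := fun r (_ : 0 < r) =>
      (∫⁻ s in Icc (x - r) (x + r), F s) / ENNReal.ofReal (2 * r)) r hr
  have h0 : ENNReal.ofReal (2 * r) ≠ 0 := by
    simp [ENNReal.ofReal_eq_zero]; linarith
  exact (ENNReal.div_le_iff_le_mul (Or.inl h0) (Or.inl ENNReal.ofReal_ne_top)).mp h

/-- For nonnegative locally integrable `f, g`, the pointwise estimate
`M_D(f,g)(x) ≤ C · M₁(f · M₁ g)(x)` holds. -/
theorem MD_le_M1_mul_M1 :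
    ∃ C : ℝ, 0 < C ∧
      ∀ f g : ℝ → ℝ, (∀ x, 0 ≤ f x) → (∀ x, 0 ≤ g x) →
        LocallyIntegrable f volume → LocallyIntegrable g volume →
        ∀ x : ℝ,
          MD f g x ≤
            ENNReal.ofReal C *
              M1 (fun t => ENNReal.ofReal (f t) *
                M1 (fun s => ENNReal.ofReal (g s)) t) x := by
  refine ⟨1, one_pos, fun f g hf hg hfi hgi x => ?_⟩
  set F : ℝ → ℝ≥0∞ := fun t => ENNReal.ofReal (f t) with hF
  set G : ℝ → ℝ≥0∞ := fun s => ENNReal.ofReal (g s) with hG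
  set big : ℝ → ℝ≥0∞ := fun t => F t * M1 G t with hbig
  rw [ENNReal.ofReal_one, one_mul]
  rw [MD]
  refine iSup₂_le fun l hl => iSup₂_le fun w hw => ?_
  -- measurability
  have hFm : AEMeasurable F volume := hfi.aestronglyMeasurable.aemeasurable.ennreal_ofReal
  have hGm : AEMeasurable G volume := hgi.aestronglyMeasurable.aemeasurable.ennreal_ofReal
  have hH : AEMeasurable (fun p : ℝ × ℝ => F p.1 * G p.2) (volume : Measure (ℝ × ℝ)) := by
    rw [Measure.volume_eq_prod ℝ ℝ]
    exact (hFm.comp_quasiMeasurePreserving Measure.quasiMeasurePreserving_fst).mul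
      (hGm.comp_quasiMeasurePreserving Measure.quasiMeasurePreserving_snd)
  -- rewrite the integrand
  have habs : ∀ p : ℝ × ℝ, ENNReal.ofReal |f p.1 * g p.2| = F p.1 * G p.2 := by
    intro p
    rw [abs_of_nonneg (mul_nonneg (hf _) (hg _)), ENNReal.ofReal_mul (hf _)]
  have hint : (∫⁻ p in para x l w, ENNReal.ofReal |f p.1 * g p.2|) =
      ∫⁻ y in Icc (x - l) (x + l), F y * ∫⁻ z in Icc (y - w) (y + w), G z := by
    simp only [habs]
    rw [← lintegral_indicator (measurableSet_para x l w), Measure.volume_eq_prod ℝ ℝ,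
      lintegral_prod _ ((hH.indicator (measurableSet_para x l w)).mono_measure
        (le_of_eq (Measure.volume_eq_prod ℝ ℝ).symm))]
    rw [← lintegral_indicator (measurableSet_Icc :
      MeasurableSet (Icc (x - l) (x + l)))]
    congr 1
    funext y
    by_cases hy : y ∈ Icc (x - l) (x + l)
    · have : (fun z => (para x l w).indicator (fun p => F p.1 * G p.2) (y, z)) =
          fun z => (Icc (y - w) (y + w)).indicator (fun z => F y * G z) z := by
        funext z
        by_cases hz : z ∈ Icc (y - w) (y + w)
        · rw [indicator_of_mem hz, indicator_of_mem ((mem_para_iff (y, z)).mpr ⟨hy, hz⟩)]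
        · rw [indicator_of_notMem hz, indicator_of_notMem
            (fun hmem => hz ((mem_para_iff (y, z)).mp hmem).2)]
      rw [this, lintegral_indicator measurableSet_Icc, indicator_of_mem hy,
        lintegral_const_mul' _ _ ENNReal.ofReal_ne_top]
    · have : (fun z => (para x l w).indicator (fun p => F p.1 * G p.2) (y, z)) =
          fun _ => 0 := by
        funext z
        exact indicator_of_notMem (fun hmem => hy ((mem_para_iff (y, z)).mp hmem).1) _
      rw [this, lintegral_const, zero_mul, indicator_of_notMem hy]
  -- bound
  have hbound : (∫⁻ p in para x l w, ENNReal.ofReal |f p.1 * g p.2|) ≤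
      M1 big x * volume (para x l w) := by
    rw [hint, volume_para hl.le hw.le]
    calc (∫⁻ y in Icc (x - l) (x + l), F y * ∫⁻ z in Icc (y - w) (y + w), G z)
        ≤ ∫⁻ y in Icc (x - l) (x + l), big y * ENNReal.ofReal (2 * w) := by
          refine lintegral_mono fun y => ?_
          rw [hbig, mul_assoc]
          exact mul_le_mul_right (setLIntegral_le_M1 G y w hw) _
      _ = (∫⁻ y in Icc (x - l) (x + l), big y) * ENNReal.ofReal (2 * w) :=
          lintegral_mul_const' _ _ ENNReal.ofReal_ne_top
      _ ≤ (M1 big x * ENNReal.ofReal (2 * l)) * ENNReal.ofReal (2 * w) :=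
          mul_le_mul_left (setLIntegral_le_M1 big x l hl) _
      _ = M1 big x * (ENNReal.ofReal (2 * l) * ENNReal.ofReal (2 * w)) := by ring
  have hvol0 : volume (para x l w) ≠ 0 := by
    rw [volume_para hl.le hw.le]
    simp [ENNReal.ofReal_eq_zero]
    constructor <;> linarith
  exact (ENNReal.div_le_iff_le_mul (Or.inl hvol0)
    (Or.inl ((volume_para hl.le hw.le) ▸ ENNReal.mul_ne_top ENNReal.ofReal_ne_top
      ENNReal.ofReal_ne_top))).mpr hbound
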